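/- arXiv:1309.7094 — 2 statements merged into one kernel-verified Lean document; each statement's English description precedes it below -/
import Mathlib

section
/- Let q, t ∈ ℂ^× and N ≥ 1. For every function f : (ℂ^×)^N → ℂ and every point x = (x_1,…,x_N) ∈ (ℂ^×)^N such that q^a x_i ≠ q^b x_j for all i ≠ j and all a, b ∈ {−1,0,1}, the Macdonald operators H_N(q,t) and H_N(q^{-1},t^{-1}) commute: (H_N(q,t)(H_N(q^{-1},t^{-1})f))(x) = (H_N(q^{-1},t^{-1})(H_N(q,t)f))(x). -/
open scoped BigOperators

/-- The Macdonald operator `H_N(q,t)` acting on functions of `N` complex variables: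
`(H_N(q,t)f)(x) = Σ_{i=1}^N ∏_{j≠i} (t x_i − x_j)/(x_i − x_j) · f(x_1,…,q x_i,…,x_N)`. -/
noncomputable def macOp (q t : ℂ) {N : ℕ} (f : (Fin N → ℂ) → ℂ) (x : Fin N → ℂ) : ℂ :=
  ∑ i : Fin N,
    (∏ j ∈ Finset.univ.erase i, (t * x i - x j) / (x i - x j)) *
      f (Function.update x i (q * x i))

-- Auxiliary lemmas
section Aux
open Finset


open Finset

lemma prod_univ_erase_inl {α β : Type*} [Fintype α] [Fintype β] [DecidableEq α] [DecidableEq β]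
    (f : α ⊕ β → ℂ) (i : α) :
    ∏ l ∈ Finset.univ.erase (Sum.inl i), f l
      = (∏ a ∈ Finset.univ.erase i, f (Sum.inl a)) * ∏ b, f (Sum.inr b) := by
  have h : Finset.univ.erase (Sum.inl i)
      = ((Finset.univ.erase i).image (Sum.inl : α → α ⊕ β)) ∪
        (Finset.univ.image (Sum.inr : β → α ⊕ β)) := by
    ext l
    cases l <;> simp [eq_comm]
  rw [h, Finset.prod_union (by simp [Finset.disjoint_left]),
    Finset.prod_image (fun a _ b _ h => Sum.inl_injective h),
    Finset.prod_image (fun a _ b _ h => Sum.inr_injective h)]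

lemma prod_univ_erase_inr {α β : Type*} [Fintype α] [Fintype β] [DecidableEq α] [DecidableEq β]
    (f : α ⊕ β → ℂ) (i : β) :
    ∏ l ∈ Finset.univ.erase (Sum.inr i), f l
      = (∏ a, f (Sum.inl a)) * ∏ b ∈ Finset.univ.erase i, f (Sum.inr b) := by
  have h : Finset.univ.erase (Sum.inr i)
      = (Finset.univ.image (Sum.inl : α → α ⊕ β)) ∪
        ((Finset.univ.erase i).image (Sum.inr : β → α ⊕ β)) := by
    ext l
    cases l <;> simp [eq_comm]
  rw [h, Finset.prod_union (by simp [Finset.disjoint_left]),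
    Finset.prod_image (fun a _ b _ h => Sum.inl_injective h),
    Finset.prod_image (fun a _ b _ h => Sum.inr_injective h)]

lemma sum_erase_comm {N : ℕ} (h : Fin N → Fin N → ℂ) :
    ∑ i, ∑ k ∈ Finset.univ.erase i, h i k = ∑ k, ∑ i ∈ Finset.univ.erase k, h i k := by
  have e : ∀ (i : Fin N) (g : Fin N → ℂ), ∑ k ∈ Finset.univ.erase i, g k
      = ∑ k, if k = i then 0 else g k := by
    intro i g
    rw [← Finset.sum_erase (Finset.univ) (f := fun k => if k = i then 0 else g k)
      (a := i) (by simp)]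
    exact Finset.sum_congr rfl (fun k hk => by simp [(Finset.mem_erase.mp hk).1])
  simp_rw [e]
  rw [Finset.sum_comm]
  refine Finset.sum_congr rfl fun k _ => Finset.sum_congr rfl fun i _ => ?_
  by_cases hik : i = k
  · simp [hik]
  · simp only [hik, if_false, if_neg (fun hh : k = i => hik hh.symm)]

section KeyZero
open Polynomial


lemma lin_natDegree {a b : ℂ} (ha : a ≠ 0) : (C a * X - C b).natDegree = 1 := by
  rw [sub_eq_add_neg, ← C_neg]; exact natDegree_linear ha

lemma lin_leadingCoeff {a b : ℂ} (ha : a ≠ 0) : (C a * X - C b).leadingCoeff = a := by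
  rw [sub_eq_add_neg, ← C_neg]; exact leadingCoeff_linear ha

lemma lin_ne_zero {a b : ℂ} (ha : a ≠ 0) : C a * X - C b ≠ 0 := by
  intro h
  have := lin_leadingCoeff (b := b) ha
  rw [h, leadingCoeff_zero] at this
  exact ha this.symm

/-- Key residue-type identity via Lagrange interpolation. -/
lemma key_zero {ι : Type*} [Fintype ι] [DecidableEq ι] (a b u v : ι → ℂ)
    (ha : ∀ m, a m ≠ 0) (hu : ∀ m, u m ≠ 0)
    (r : ι → ℂ) (hrinj : Function.Injective r)
    (hroot : ∀ m, u m * r m - v m = 0)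
    (hlead : ∏ m, a m = ∏ m, u m)
    (hzero : ∏ m, (0 - b m) = ∏ m, (0 - v m)) :
    ∑ m, (∏ l, (a l * r m - b l)) *
      (∏ l ∈ Finset.univ.erase m, ((r m - r l)⁻¹ * (0 - r l))) = 0 := by
  set P : ℂ[X] := ∏ m, (C (a m) * X - C (b m)) with hPdef
  set Q : ℂ[X] := ∏ m, (C (u m) * X - C (v m)) with hQdef
  have hPne : P ≠ 0 := Finset.prod_ne_zero_iff.mpr fun m _ => lin_ne_zero (ha m)
  have hQne : Q ≠ 0 := Finset.prod_ne_zero_iff.mpr fun m _ => lin_ne_zero (hu m)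
  have hPnd : P.natDegree = Fintype.card ι := by
    rw [hPdef, Polynomial.natDegree_prod _ _ fun m _ => lin_ne_zero (ha m),
      Finset.sum_congr rfl fun m _ => lin_natDegree (ha m)]
    simp
  have hQnd : Q.natDegree = Fintype.card ι := by
    rw [hQdef, Polynomial.natDegree_prod _ _ fun m _ => lin_ne_zero (hu m),
      Finset.sum_congr rfl fun m _ => lin_natDegree (hu m)]
    simp
  have hPlc : P.leadingCoeff = ∏ m, a m := by
    rw [hPdef, Polynomial.leadingCoeff_prod]
    exact Finset.prod_congr rfl fun m _ => lin_leadingCoeff (ha m)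
  have hQlc : Q.leadingCoeff = ∏ m, u m := by
    rw [hQdef, Polynomial.leadingCoeff_prod]
    exact Finset.prod_congr rfl fun m _ => lin_leadingCoeff (hu m)
  have hd : P.degree = Q.degree := by
    rw [Polynomial.degree_eq_natDegree hPne, Polynomial.degree_eq_natDegree hQne, hPnd, hQnd]
  have hlc : P.leadingCoeff = Q.leadingCoeff := by rw [hPlc, hQlc, hlead]
  have hdeg : (P - Q).degree < ((Finset.univ : Finset ι).card : WithBot ℕ) := by
    have h := Polynomial.degree_sub_lt hd hPne hlc
    rw [Polynomial.degree_eq_natDegree hPne, hPnd] at h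
    simpa using h
  have hint := Lagrange.eq_interpolate (s := Finset.univ) (v := r) (f := P - Q)
    hrinj.injOn hdeg
  have h0 := congrArg (Polynomial.eval 0) hint
  have hPev : ∀ c : ℂ, P.eval c = ∏ m, (a m * c - b m) := by
    intro c; rw [hPdef]; simp [Polynomial.eval_prod]
  have hQev : ∀ c : ℂ, Q.eval c = ∏ m, (u m * c - v m) := by
    intro c; rw [hQdef]; simp [Polynomial.eval_prod]
  have hQr : ∀ m, Q.eval (r m) = 0 := fun m =>
    (hQev (r m)).trans (Finset.prod_eq_zero (Finset.mem_univ m) (hroot m))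
  have hR0 : P.eval 0 - Q.eval 0 = 0 := by
    rw [hPev, hQev]
    have e1 : ∏ m, (a m * 0 - b m) = ∏ m, ((0 : ℂ) - b m) :=
      Finset.prod_congr rfl fun m _ => by ring
    have e2 : ∏ m, (u m * 0 - v m) = ∏ m, ((0 : ℂ) - v m) :=
      Finset.prod_congr rfl fun m _ => by ring
    rw [e1, e2, hzero, sub_self]
  have hbasis : ∀ m, (Lagrange.basis Finset.univ r m).eval 0
      = ∏ l ∈ Finset.univ.erase m, ((r m - r l)⁻¹ * (0 - r l)) := by
    intro m
    simp [Lagrange.basis, Lagrange.basisDivisor, Polynomial.eval_prod]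
  simp only [Polynomial.eval_sub, Lagrange.interpolate_apply, Polynomial.eval_finset_sum,
    Polynomial.eval_mul, Polynomial.eval_C] at h0
  rw [hR0] at h0
  simp only [hQr, sub_zero, hbasis] at h0
  refine (Finset.sum_congr rfl fun m _ => ?_).trans h0.symm
  rw [hPev]

end KeyZero

lemma scalar_inl (q t xi c : ℂ) (hq0 : q ≠ 0) (hq1' : q - 1 ≠ 0)
    (hx : xi ≠ 0) :
    ((t * xi - xi) * (q * xi - t * xi)) * ((xi - q⁻¹ * xi)⁻¹ * (0 - q⁻¹ * xi)) * c
      = -((t - 1) * (q - t) * (xi ^ 2 * c)) / (q - 1) := by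
  have h : xi - q⁻¹ * xi = q⁻¹ * xi * (q - 1) := by
    have h2 : q⁻¹ * xi * (q - 1) = q⁻¹ * q * xi - q⁻¹ * xi := by ring
    rw [h2, inv_mul_cancel₀ hq0, one_mul]
  rw [h]
  field_simp
  ring

lemma scalar_inr (q t xk c : ℂ) (hq0 : q ≠ 0) (hq1' : q - 1 ≠ 0)
    (hx : xk ≠ 0) :
    ((t * (q⁻¹ * xk) - xk) * (q * (q⁻¹ * xk) - t * xk)) * ((q⁻¹ * xk - xk)⁻¹ * (0 - xk)) * c
      = ((t - 1) * (q - t) * (xk ^ 2 * c)) / (q - 1) := by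
  have h : q⁻¹ * xk - xk = -(q⁻¹ * xk * (q - 1)) := by
    have h2 : -(q⁻¹ * xk * (q - 1)) = q⁻¹ * xk - q⁻¹ * q * xk := by ring
    rw [h2, inv_mul_cancel₀ hq0, one_mul]
  have h3 : q * (q⁻¹ * xk) = xk := by
    rw [← mul_assoc, mul_inv_cancel₀ hq0, one_mul]
  rw [h, h3]
  field_simp
  ring

open Polynomial in
lemma diag_sum (q t : ℂ) (hq0 : q ≠ 0) (ht0 : t ≠ 0) (hq1 : q ≠ 1) {N : ℕ} (x : Fin N → ℂ)
    (hx0 : ∀ i, x i ≠ 0)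
    (h00 : ∀ i j, i ≠ j → x i ≠ x j)
    (h10 : ∀ i j, i ≠ j → q * x i ≠ x j) :
    ∑ i, (∏ j ∈ Finset.univ.erase i, (t * x i - x j) / (x i - x j)) *
         (∏ j ∈ Finset.univ.erase i, (t⁻¹ * (q * x i) - x j) / (q * x i - x j))
  = ∑ i, (∏ j ∈ Finset.univ.erase i, (t⁻¹ * x i - x j) / (x i - x j)) *
         (∏ j ∈ Finset.univ.erase i, (t * (q⁻¹ * x i) - x j) / (q⁻¹ * x i - x j)) := by
  have hsub : ∀ i j : Fin N, i ≠ j → x i - x j ≠ 0 := fun i j h => sub_ne_zero.mpr (h00 i j h)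
  have hqsub : ∀ i j : Fin N, i ≠ j → q * x i - x j ≠ 0 :=
    fun i j h => sub_ne_zero.mpr (h10 i j h)
  have hxqinv : ∀ i j : Fin N, i ≠ j → x i - q⁻¹ * x j ≠ 0 := by
    intro i j h
    refine sub_ne_zero.mpr (fun hc => h10 i j h ?_)
    rw [hc, ← mul_assoc, mul_inv_cancel₀ hq0, one_mul]
  have hqinvsub : ∀ i j : Fin N, i ≠ j → q⁻¹ * x i - x j ≠ 0 := by
    intro i j h
    refine sub_ne_zero.mpr (fun hc => h10 j i h.symm ?_)
    rw [← hc, ← mul_assoc, mul_inv_cancel₀ hq0, one_mul]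
  have hqinv1 : (1 : ℂ) - q⁻¹ ≠ 0 := by
    refine sub_ne_zero.mpr (fun hc => hq1 ?_)
    field_simp at hc
    exact hc
  have hselfsub : ∀ i : Fin N, x i - q⁻¹ * x i ≠ 0 := by
    intro i
    have : x i - q⁻¹ * x i = x i * (1 - q⁻¹) := by ring
    rw [this]
    exact mul_ne_zero (hx0 i) hqinv1
  have hselfsub' : ∀ i : Fin N, q⁻¹ * x i - x i ≠ 0 := by
    intro i
    intro hc
    apply hselfsub i
    have := sub_eq_zero.mp hc
    rw [this]; ring
  have hq1' : q - 1 ≠ 0 := sub_ne_zero.mpr hq1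
  -- trivial case t = 1
  by_cases ht1 : t = 1
  · subst ht1
    simp only [inv_one, one_mul]
    refine Finset.sum_congr rfl (fun i _ => ?_)
    have e1 : ∏ j ∈ Finset.univ.erase i, (x i - x j) / (x i - x j) = 1 :=
      Finset.prod_eq_one fun j hj => div_self (hsub i j (Ne.symm (Finset.mem_erase.mp hj).1))
    have e2 : ∏ j ∈ Finset.univ.erase i, (q * x i - x j) / (q * x i - x j) = 1 :=
      Finset.prod_eq_one fun j hj => div_self (hqsub i j (Ne.symm (Finset.mem_erase.mp hj).1))
    have e3 : ∏ j ∈ Finset.univ.erase i, (q⁻¹ * x i - x j) / (q⁻¹ * x i - x j) = 1 :=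
      Finset.prod_eq_one fun j hj => div_self (hqinvsub i j (Ne.symm (Finset.mem_erase.mp hj).1))
    rw [e1, e2, e3]
  by_cases htq : t = q
  · subst htq
    refine Finset.sum_congr rfl (fun i _ => ?_)
    rw [← Finset.prod_mul_distrib, ← Finset.prod_mul_distrib]
    have e1 : ∏ j ∈ Finset.univ.erase i,
        ((t * x i - x j) / (x i - x j) * ((t⁻¹ * (t * x i) - x j) / (t * x i - x j))) = 1 := by
      refine Finset.prod_eq_one fun j hj => ?_
      have hij := Ne.symm (Finset.mem_erase.mp hj).1
      have h1 := hsub i j hij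
      have h2 := hqsub i j hij
      have hsimp : t⁻¹ * (t * x i) = x i := by field_simp
      rw [hsimp, div_mul_div_comm, mul_comm (t * x i - x j) (x i - x j),
        div_self (mul_ne_zero h1 h2)]
    have e2 : ∏ j ∈ Finset.univ.erase i,
        ((t⁻¹ * x i - x j) / (x i - x j) * ((t * (t⁻¹ * x i) - x j) / (t⁻¹ * x i - x j))) = 1 := by
      refine Finset.prod_eq_one fun j hj => ?_
      have hij := Ne.symm (Finset.mem_erase.mp hj).1
      have h1 := hsub i j hij
      have h2 := hqinvsub i j hij
      have hsimp : t * (t⁻¹ * x i) = x i := by field_simp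
      rw [hsimp, div_mul_div_comm, mul_comm (t⁻¹ * x i - x j) (x i - x j),
        div_self (mul_ne_zero h1 h2)]
    rw [e1, e2]
  -- main case
  have ht1' : t - 1 ≠ 0 := sub_ne_zero.mpr ht1
  have htq' : q - t ≠ 0 := sub_ne_zero.mpr fun h => htq h.symm
  set r : Fin N ⊕ Fin N → ℂ := Sum.elim x (fun k => q⁻¹ * x k) with hrdef
  have hrinl : ∀ i, r (Sum.inl i) = x i := fun i => rfl
  have hrinr : ∀ k, r (Sum.inr k) = q⁻¹ * x k := fun k => rfl
  have hrinj : Function.Injective r := by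
    rintro (i | i) (j | j) hij <;> simp only [hrdef, Sum.elim_inl, Sum.elim_inr] at hij
    · have : i = j := by by_contra hh; exact h00 i j hh hij
      rw [this]
    · exfalso
      have hqx : q * x i = x j := by rw [hij, ← mul_assoc, mul_inv_cancel₀ hq0, one_mul]
      by_cases hh : i = j
      · subst hh
        apply hq1
        have h2 := hqx.trans (one_mul (x i)).symm
        exact mul_right_cancel₀ (hx0 i) h2
      · exact h10 i j hh hqx
    · exfalso
      have hqx : q * x j = x i := by rw [← hij, ← mul_assoc, mul_inv_cancel₀ hq0, one_mul]
      by_cases hh : j = i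
      · subst hh
        apply hq1
        have h2 := hqx.trans (one_mul (x j)).symm
        exact mul_right_cancel₀ (hx0 j) h2
      · exact h10 j i hh hqx
    · have h2 : x i = x j := mul_left_cancel₀ (inv_ne_zero hq0) hij
      have hij2 : i = j := by by_contra hh; exact h00 i j hh h2
      rw [hij2]
  have hkey := key_zero (Sum.elim (fun _ : Fin N => t) (fun _ : Fin N => q))
      (Sum.elim (fun j => x j) (fun j => t * x j))
      (Sum.elim (fun _ : Fin N => t) (fun _ : Fin N => q))
      (Sum.elim (fun j => t * x j) (fun j => x j))
      (by rintro (m | m) <;> simp [ht0, hq0])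
      (by rintro (m | m) <;> simp [ht0, hq0])
      r hrinj
      (by
        rintro (m | m) <;> simp only [hrdef, Sum.elim_inl, Sum.elim_inr]
        · ring
        · rw [← mul_assoc, mul_inv_cancel₀ hq0, one_mul, sub_self])
      rfl
      (by
        rw [Fintype.prod_sum_type, Fintype.prod_sum_type]
        simp only [Sum.elim_inl, Sum.elim_inr]
        exact mul_comm _ _)
  rw [Fintype.sum_sum_type] at hkey
  set c1 : ℂ := -((t - 1) * (q - t) * t ^ (N - 1) * ∏ j, (x j) ^ 2) / (q - 1) with hc1def
  have hc1 : c1 ≠ 0 := by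
    rw [hc1def]
    apply div_ne_zero _ hq1'
    exact neg_ne_zero.mpr (mul_ne_zero (mul_ne_zero (mul_ne_zero ht1' htq')
      (pow_ne_zero _ ht0)) (Finset.prod_ne_zero_iff.mpr fun j _ => pow_ne_zero _ (hx0 j)))
  have hL : ∀ i : Fin N,
      (∏ l, (Sum.elim (fun _ : Fin N => t) (fun _ : Fin N => q) l * r (Sum.inl i)
          - Sum.elim (fun j => x j) (fun j => t * x j) l)) *
        (∏ l ∈ Finset.univ.erase (Sum.inl i), ((r (Sum.inl i) - r l)⁻¹ * (0 - r l)))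
      = c1 * ((∏ j ∈ Finset.univ.erase i, (t * x i - x j) / (x i - x j)) *
          (∏ j ∈ Finset.univ.erase i, (t⁻¹ * (q * x i) - x j) / (q * x i - x j))) := by
    intro i
    have hPe : (∏ l, (Sum.elim (fun _ : Fin N => t) (fun _ : Fin N => q) l * r (Sum.inl i)
          - Sum.elim (fun j => x j) (fun j => t * x j) l))
        = ((t * x i - x i) * (q * x i - t * x i)) *
          ∏ j ∈ Finset.univ.erase i, ((t * x i - x j) * (q * x i - t * x j)) := by
      rw [Fintype.prod_sum_type]
      simp only [hrinl, Sum.elim_inl, Sum.elim_inr]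
      rw [← Finset.mul_prod_erase Finset.univ (fun j => t * x i - x j) (Finset.mem_univ i),
        ← Finset.mul_prod_erase Finset.univ (fun j => q * x i - t * x j) (Finset.mem_univ i)]
      conv_rhs => rw [Finset.prod_mul_distrib]
      ring
    have hprod : (∏ l ∈ Finset.univ.erase (Sum.inl i), ((r (Sum.inl i) - r l)⁻¹ * (0 - r l)))
        = ((x i - q⁻¹ * x i)⁻¹ * (0 - q⁻¹ * x i)) *
          ∏ j ∈ Finset.univ.erase i,
            (((x i - x j)⁻¹ * (0 - x j)) * ((x i - q⁻¹ * x j)⁻¹ * (0 - q⁻¹ * x j))) := by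
      rw [prod_univ_erase_inl (fun l => (r (Sum.inl i) - r l)⁻¹ * (0 - r l)) i]
      simp only [hrdef, Sum.elim_inl, Sum.elim_inr]
      rw [← Finset.mul_prod_erase Finset.univ
          (fun j => (x i - q⁻¹ * x j)⁻¹ * (0 - q⁻¹ * x j)) (Finset.mem_univ i)]
      conv_rhs => rw [Finset.prod_mul_distrib]
      ring
    rw [hPe, hprod]
    have hper : ∀ j ∈ Finset.univ.erase i,
        ((t * x i - x j) * (q * x i - t * x j)) *
          (((x i - x j)⁻¹ * (0 - x j)) * ((x i - q⁻¹ * x j)⁻¹ * (0 - q⁻¹ * x j)))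
        = (t * (x j) ^ 2) *
          ((t * x i - x j) / (x i - x j) * ((t⁻¹ * (q * x i) - x j) / (q * x i - x j))) := by
      intro j hj
      have hij := Ne.symm (Finset.mem_erase.mp hj).1
      have e1 : (x i - q⁻¹ * x j)⁻¹ * (0 - q⁻¹ * x j) = (q * x i - x j)⁻¹ * (0 - x j) := by
        have hxe : x i - q⁻¹ * x j = q⁻¹ * (q * x i - x j) := by
          rw [mul_sub, ← mul_assoc, inv_mul_cancel₀ hq0, one_mul]
        have h3 := hqsub i j hij
        rw [hxe, mul_inv, inv_inv]
        field_simp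
        ring
      have e2 : q * x i - t * x j = t * (t⁻¹ * (q * x i) - x j) := by
        rw [mul_sub, ← mul_assoc, mul_inv_cancel₀ ht0, one_mul]
      rw [e1, e2, div_eq_mul_inv, div_eq_mul_inv]
      ring
    conv_rhs => rw [← Finset.prod_mul_distrib]
    conv_lhs => rw [mul_mul_mul_comm, ← Finset.prod_mul_distrib,
      Finset.prod_congr rfl hper, Finset.prod_mul_distrib]
    have hcard : (Finset.univ.erase i).card = N - 1 := by
      rw [Finset.card_erase_of_mem (Finset.mem_univ i), Finset.card_univ, Fintype.card_fin]
    have htx : ∏ j ∈ Finset.univ.erase i, (t * (x j) ^ 2)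
        = t ^ (N - 1) * ∏ j ∈ Finset.univ.erase i, (x j) ^ 2 := by
      rw [Finset.prod_mul_distrib, Finset.prod_const, hcard]
    rw [htx]
    have hxp : (x i) ^ 2 * ∏ j ∈ Finset.univ.erase i, (x j) ^ 2 = ∏ j, (x j) ^ 2 :=
      Finset.mul_prod_erase Finset.univ (fun j => (x j) ^ 2) (Finset.mem_univ i)
    have hsc : ((t * x i - x i) * (q * x i - t * x i)) *
        ((x i - q⁻¹ * x i)⁻¹ * (0 - q⁻¹ * x i)) *
        (t ^ (N - 1) * ∏ j ∈ Finset.univ.erase i, (x j) ^ 2) = c1 := by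
      rw [hc1def, ← hxp]
      linear_combination scalar_inl q t (x i)
        (t ^ (N - 1) * ∏ j ∈ Finset.univ.erase i, (x j) ^ 2) hq0 hq1' (hx0 i)
    linear_combination (∏ j ∈ Finset.univ.erase i,
      ((t * x i - x j) / (x i - x j) * ((t⁻¹ * (q * x i) - x j) / (q * x i - x j)))) * hsc
  have hR : ∀ k : Fin N,
      (∏ l, (Sum.elim (fun _ : Fin N => t) (fun _ : Fin N => q) l * r (Sum.inr k)
          - Sum.elim (fun j => x j) (fun j => t * x j) l)) *
        (∏ l ∈ Finset.univ.erase (Sum.inr k), ((r (Sum.inr k) - r l)⁻¹ * (0 - r l)))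
      = (-c1) * ((∏ j ∈ Finset.univ.erase k, (t⁻¹ * x k - x j) / (x k - x j)) *
          (∏ j ∈ Finset.univ.erase k, (t * (q⁻¹ * x k) - x j) / (q⁻¹ * x k - x j))) := by
    intro k
    have hPe : (∏ l, (Sum.elim (fun _ : Fin N => t) (fun _ : Fin N => q) l * r (Sum.inr k)
          - Sum.elim (fun j => x j) (fun j => t * x j) l))
        = ((t * (q⁻¹ * x k) - x k) * (q * (q⁻¹ * x k) - t * x k)) *
          ∏ j ∈ Finset.univ.erase k,
            ((t * (q⁻¹ * x k) - x j) * (q * (q⁻¹ * x k) - t * x j)) := by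
      rw [Fintype.prod_sum_type]
      simp only [hrinr, Sum.elim_inl, Sum.elim_inr]
      rw [← Finset.mul_prod_erase Finset.univ (fun j => t * (q⁻¹ * x k) - x j)
          (Finset.mem_univ k),
        ← Finset.mul_prod_erase Finset.univ (fun j => q * (q⁻¹ * x k) - t * x j)
          (Finset.mem_univ k)]
      conv_rhs => rw [Finset.prod_mul_distrib]
      ring
    have hprod : (∏ l ∈ Finset.univ.erase (Sum.inr k), ((r (Sum.inr k) - r l)⁻¹ * (0 - r l)))
        = ((q⁻¹ * x k - x k)⁻¹ * (0 - x k)) *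
          ∏ j ∈ Finset.univ.erase k,
            (((q⁻¹ * x k - x j)⁻¹ * (0 - x j)) *
              ((q⁻¹ * x k - q⁻¹ * x j)⁻¹ * (0 - q⁻¹ * x j))) := by
      rw [prod_univ_erase_inr (fun l => (r (Sum.inr k) - r l)⁻¹ * (0 - r l)) k]
      simp only [hrdef, Sum.elim_inl, Sum.elim_inr]
      rw [← Finset.mul_prod_erase Finset.univ
          (fun j => (q⁻¹ * x k - x j)⁻¹ * (0 - x j)) (Finset.mem_univ k)]
      conv_rhs => rw [Finset.prod_mul_distrib]
      ring
    rw [hPe, hprod]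
    have hper : ∀ j ∈ Finset.univ.erase k,
        ((t * (q⁻¹ * x k) - x j) * (q * (q⁻¹ * x k) - t * x j)) *
          (((q⁻¹ * x k - x j)⁻¹ * (0 - x j)) * ((q⁻¹ * x k - q⁻¹ * x j)⁻¹ * (0 - q⁻¹ * x j)))
        = (t * (x j) ^ 2) *
          ((t⁻¹ * x k - x j) / (x k - x j) * ((t * (q⁻¹ * x k) - x j) / (q⁻¹ * x k - x j))) := by
      intro j hj
      have hkj := Ne.symm (Finset.mem_erase.mp hj).1
      have e1 : (q⁻¹ * x k - q⁻¹ * x j)⁻¹ * (0 - q⁻¹ * x j) = (x k - x j)⁻¹ * (0 - x j) := by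
        have hxe : q⁻¹ * x k - q⁻¹ * x j = q⁻¹ * (x k - x j) := by ring
        have h1 := hsub k j hkj
        rw [hxe, mul_inv, inv_inv]
        field_simp
        ring
      have e2 : q * (q⁻¹ * x k) - t * x j = t * (t⁻¹ * x k - x j) := by
        rw [← mul_assoc, mul_inv_cancel₀ hq0, one_mul, mul_sub, ← mul_assoc,
          mul_inv_cancel₀ ht0, one_mul]
      rw [e1, e2, div_eq_mul_inv, div_eq_mul_inv]
      ring
    conv_rhs => rw [← Finset.prod_mul_distrib]
    conv_lhs => rw [mul_mul_mul_comm, ← Finset.prod_mul_distrib,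
      Finset.prod_congr rfl hper, Finset.prod_mul_distrib]
    have hcard : (Finset.univ.erase k).card = N - 1 := by
      rw [Finset.card_erase_of_mem (Finset.mem_univ k), Finset.card_univ, Fintype.card_fin]
    have htx : ∏ j ∈ Finset.univ.erase k, (t * (x j) ^ 2)
        = t ^ (N - 1) * ∏ j ∈ Finset.univ.erase k, (x j) ^ 2 := by
      rw [Finset.prod_mul_distrib, Finset.prod_const, hcard]
    rw [htx]
    have hxp : (x k) ^ 2 * ∏ j ∈ Finset.univ.erase k, (x j) ^ 2 = ∏ j, (x j) ^ 2 :=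
      Finset.mul_prod_erase Finset.univ (fun j => (x j) ^ 2) (Finset.mem_univ k)
    have hsc : ((t * (q⁻¹ * x k) - x k) * (q * (q⁻¹ * x k) - t * x k)) *
        ((q⁻¹ * x k - x k)⁻¹ * (0 - x k)) *
        (t ^ (N - 1) * ∏ j ∈ Finset.univ.erase k, (x j) ^ 2) = -c1 := by
      rw [hc1def, ← hxp]
      linear_combination scalar_inr q t (x k)
        (t ^ (N - 1) * ∏ j ∈ Finset.univ.erase k, (x j) ^ 2) hq0 hq1' (hx0 k)
    linear_combination (∏ j ∈ Finset.univ.erase k,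
      ((t⁻¹ * x k - x j) / (x k - x j) * ((t * (q⁻¹ * x k) - x j) / (q⁻¹ * x k - x j)))) * hsc
  have hkey2 : c1 * (∑ i, (∏ j ∈ Finset.univ.erase i, (t * x i - x j) / (x i - x j)) *
        (∏ j ∈ Finset.univ.erase i, (t⁻¹ * (q * x i) - x j) / (q * x i - x j)))
      + (-c1) * (∑ i, (∏ j ∈ Finset.univ.erase i, (t⁻¹ * x i - x j) / (x i - x j)) *
        (∏ j ∈ Finset.univ.erase i, (t * (q⁻¹ * x i) - x j) / (q⁻¹ * x i - x j))) = 0 := by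
    rw [Finset.mul_sum, Finset.mul_sum]
    calc (∑ i, c1 * ((∏ j ∈ Finset.univ.erase i, (t * x i - x j) / (x i - x j)) *
            (∏ j ∈ Finset.univ.erase i, (t⁻¹ * (q * x i) - x j) / (q * x i - x j))))
          + ∑ i, (-c1) * ((∏ j ∈ Finset.univ.erase i, (t⁻¹ * x i - x j) / (x i - x j)) *
            (∏ j ∈ Finset.univ.erase i, (t * (q⁻¹ * x i) - x j) / (q⁻¹ * x i - x j)))
        = (∑ i, (∏ l, (Sum.elim (fun _ : Fin N => t) (fun _ : Fin N => q) l * r (Sum.inl i)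
              - Sum.elim (fun j => x j) (fun j => t * x j) l)) *
            (∏ l ∈ Finset.univ.erase (Sum.inl i), ((r (Sum.inl i) - r l)⁻¹ * (0 - r l))))
          + ∑ k, (∏ l, (Sum.elim (fun _ : Fin N => t) (fun _ : Fin N => q) l * r (Sum.inr k)
              - Sum.elim (fun j => x j) (fun j => t * x j) l)) *
            (∏ l ∈ Finset.univ.erase (Sum.inr k), ((r (Sum.inr k) - r l)⁻¹ * (0 - r l))) := by
          rw [Finset.sum_congr rfl fun i _ => (hL i).symm,
            Finset.sum_congr rfl fun k _ => (hR k).symm]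
      _ = 0 := hkey
  have hsplit : c1 * ((∑ i, (∏ j ∈ Finset.univ.erase i, (t * x i - x j) / (x i - x j)) *
        (∏ j ∈ Finset.univ.erase i, (t⁻¹ * (q * x i) - x j) / (q * x i - x j)))
      - (∑ i, (∏ j ∈ Finset.univ.erase i, (t⁻¹ * x i - x j) / (x i - x j)) *
        (∏ j ∈ Finset.univ.erase i, (t * (q⁻¹ * x i) - x j) / (q⁻¹ * x i - x j)))) = 0 := by
    linear_combination hkey2
  have := (mul_eq_zero.mp hsplit).resolve_left hc1
  exact sub_eq_zero.mp this


lemma cross (q t a b : ℂ) (hq0 : q ≠ 0) (ht0 : t ≠ 0)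
    (h1 : a - b ≠ 0) (h2 : b - q * a ≠ 0) (h3 : a - q⁻¹ * b ≠ 0) :
    (t * a - b) / (a - b) * ((t⁻¹ * b - q * a) / (b - q * a))
      = (t⁻¹ * b - a) / (b - a) * ((t * a - q⁻¹ * b) / (a - q⁻¹ * b)) := by
  have h1' : b - a ≠ 0 := fun hc => h1 (by linear_combination -hc)
  have h2' : q * a - b ≠ 0 := fun hc => h2 (by linear_combination -hc)
  have e1 : t⁻¹ * (b - t * (q * a)) = t⁻¹ * b - q * a := by
    rw [mul_sub, ← mul_assoc, inv_mul_cancel₀ ht0, one_mul]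
  have e2 : q⁻¹ * (q * a - b) = a - q⁻¹ * b := by
    rw [mul_sub, ← mul_assoc, inv_mul_cancel₀ hq0, one_mul]
  have e3 : t⁻¹ * (b - t * a) = t⁻¹ * b - a := by
    rw [mul_sub, ← mul_assoc, inv_mul_cancel₀ ht0, one_mul]
  have e4 : q⁻¹ * (q * (t * a) - b) = t * a - q⁻¹ * b := by
    rw [mul_sub, ← mul_assoc, inv_mul_cancel₀ hq0, one_mul]
  rw [← e1, ← e2, ← e3, ← e4, mul_div_mul_left _ _ (inv_ne_zero hq0)]
  rw [div_mul_div_comm, div_mul_div_comm, div_eq_div_iff (mul_ne_zero h1 h2) (mul_ne_zero h1' h2')]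
  ring

lemma expand (Q T : ℂ) (hQ0 : Q ≠ 0) (hT0 : T ≠ 0) {N : ℕ}
    (f : (Fin N → ℂ) → ℂ) (x : Fin N → ℂ) :
    macOp Q T (macOp Q⁻¹ T⁻¹ f) x
      = (∑ i, (∏ j ∈ Finset.univ.erase i, (T * x i - x j) / (x i - x j)) *
              (∏ j ∈ Finset.univ.erase i, (T⁻¹ * (Q * x i) - x j) / (Q * x i - x j))) * f x
        + ∑ i, ∑ k ∈ Finset.univ.erase i,
            ((∏ j ∈ (Finset.univ.erase i).erase k, (T * x i - x j) / (x i - x j)) *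
             ((T * x i - x k) / (x i - x k)) *
             ((T⁻¹ * x k - Q * x i) / (x k - Q * x i)) *
             (∏ j ∈ (Finset.univ.erase k).erase i, (T⁻¹ * x k - x j) / (x k - x j))) *
            f (Function.update (Function.update x i (Q * x i)) k (Q⁻¹ * x k)) := by
  simp only [macOp, Finset.mul_sum]
  set F : Fin N → Fin N → ℂ := fun i k =>
    (∏ j ∈ Finset.univ.erase i, (T * x i - x j) / (x i - x j)) *
      ((∏ j ∈ Finset.univ.erase k,
          (T⁻¹ * Function.update x i (Q * x i) k - Function.update x i (Q * x i) j) /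
            (Function.update x i (Q * x i) k - Function.update x i (Q * x i) j)) *
        f (Function.update (Function.update x i (Q * x i)) k
            (Q⁻¹ * Function.update x i (Q * x i) k))) with hF
  have hsplit : ∑ i, ∑ k, F i k = ∑ i, F i i + ∑ i, ∑ k ∈ Finset.univ.erase i, F i k := by
    rw [← Finset.sum_add_distrib]
    exact Finset.sum_congr rfl fun i _ => (Finset.add_sum_erase _ (F i) (Finset.mem_univ i)).symm
  rw [hsplit]
  congr 1
  · -- diagonal part
    rw [Finset.sum_mul]
    refine Finset.sum_congr rfl fun i _ => ?_
    have harg : Function.update (Function.update x i (Q * x i)) i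
        (Q⁻¹ * Function.update x i (Q * x i) i) = x := by
      rw [Function.update_self, Function.update_idem, ← mul_assoc, inv_mul_cancel₀ hQ0,
        one_mul, Function.update_eq_self]
    have hprod : (∏ j ∈ Finset.univ.erase i,
        (T⁻¹ * Function.update x i (Q * x i) i - Function.update x i (Q * x i) j) /
          (Function.update x i (Q * x i) i - Function.update x i (Q * x i) j))
        = ∏ j ∈ Finset.univ.erase i, (T⁻¹ * (Q * x i) - x j) / (Q * x i - x j) := by
      refine Finset.prod_congr rfl fun j hj => ?_
      rw [Function.update_self, Function.update_of_ne (Finset.mem_erase.mp hj).1]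
    simp only [hF]
    rw [harg, hprod, mul_assoc]
  · -- off-diagonal part
    refine Finset.sum_congr rfl fun i _ => Finset.sum_congr rfl fun k hk => ?_
    have hki : k ≠ i := (Finset.mem_erase.mp hk).1
    have hik : i ≠ k := hki.symm
    have huk : Function.update x i (Q * x i) k = x k := Function.update_of_ne hki _ _
    have harg : Function.update (Function.update x i (Q * x i)) k
        (Q⁻¹ * Function.update x i (Q * x i) k)
        = Function.update (Function.update x i (Q * x i)) k (Q⁻¹ * x k) := by rw [huk]
    have hA : (∏ j ∈ Finset.univ.erase i, (T * x i - x j) / (x i - x j))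
        = ((T * x i - x k) / (x i - x k)) *
          ∏ j ∈ (Finset.univ.erase i).erase k, (T * x i - x j) / (x i - x j) :=
      (Finset.mul_prod_erase _ _ (Finset.mem_erase.mpr ⟨hki, Finset.mem_univ k⟩)).symm
    have hB : (∏ j ∈ Finset.univ.erase k,
        (T⁻¹ * Function.update x i (Q * x i) k - Function.update x i (Q * x i) j) /
          (Function.update x i (Q * x i) k - Function.update x i (Q * x i) j))
        = ((T⁻¹ * x k - Q * x i) / (x k - Q * x i)) *
          ∏ j ∈ (Finset.univ.erase k).erase i, (T⁻¹ * x k - x j) / (x k - x j) := by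
      rw [← Finset.mul_prod_erase _ _ (Finset.mem_erase.mpr ⟨hik, Finset.mem_univ i⟩)]
      have h1 : (T⁻¹ * Function.update x i (Q * x i) k - Function.update x i (Q * x i) i) /
          (Function.update x i (Q * x i) k - Function.update x i (Q * x i) i)
          = (T⁻¹ * x k - Q * x i) / (x k - Q * x i) := by
        rw [huk, Function.update_self]
      rw [h1]
      refine congrArg _ (Finset.prod_congr rfl fun j hj => ?_)
      have hji : j ≠ i := (Finset.mem_erase.mp hj).1
      rw [huk, Function.update_of_ne hji]
    simp only [hF]
    rw [harg, hA, hB]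
    ring

end Aux


/-- The Macdonald operators `H_N(q,t)` and `H_N(q⁻¹,t⁻¹)` commute: for every function `f`
and every point `x` with nonzero coordinates satisfying `q^a x_i ≠ q^b x_j` for all `i ≠ j`
and `a, b ∈ {−1,0,1}`, we have `H_N(q,t) H_N(q⁻¹,t⁻¹) f (x) = H_N(q⁻¹,t⁻¹) H_N(q,t) f (x)`. -/

theorem macOp_commute (q t : ℂ) (hq : q ≠ 0) (ht : t ≠ 0) (N : ℕ) (hN : 1 ≤ N)
    (f : (Fin N → ℂ) → ℂ) (x : Fin N → ℂ) (hx0 : ∀ i, x i ≠ 0)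
    (hsep : ∀ i j, i ≠ j → ∀ a b : ℤ, a ∈ ({-1, 0, 1} : Set ℤ) → b ∈ ({-1, 0, 1} : Set ℤ) →
      q ^ a * x i ≠ q ^ b * x j) :
    macOp q t (macOp q⁻¹ t⁻¹ f) x = macOp q⁻¹ t⁻¹ (macOp q t f) x := by
  have h00 : ∀ i j, i ≠ j → x i ≠ x j := fun i j hij => by
    have h := hsep i j hij 0 0 (by simp) (by simp)
    simpa using h
  have h10 : ∀ i j, i ≠ j → q * x i ≠ x j := fun i j hij => by
    have h := hsep i j hij 1 0 (by simp) (by simp)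
    simpa using h
  have h10' : ∀ i j, i ≠ j → q⁻¹ * x i ≠ x j := fun i j hij => by
    have h := hsep i j hij (-1) 0 (by simp) (by simp)
    simpa [zpow_neg, zpow_one] using h
  by_cases hq1 : q = 1
  · subst hq1
    simp only [inv_one]
    have hup : ∀ (y : Fin N → ℂ) (i : Fin N), Function.update y i (1 * y i) = y :=
      fun y i => by rw [one_mul, Function.update_eq_self]
    simp only [macOp, hup]
    simp only [← Finset.sum_mul]
    ring
  · rw [expand q t hq ht f x,
      show macOp q⁻¹ t⁻¹ (macOp q t f) x = macOp q⁻¹ t⁻¹ (macOp q⁻¹⁻¹ t⁻¹⁻¹ f) x from by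
        rw [inv_inv, inv_inv],
      expand q⁻¹ t⁻¹ (inv_ne_zero hq) (inv_ne_zero ht) f x]
    simp only [inv_inv]
    congr 1
    · rw [diag_sum q t hq ht hq1 x hx0 h00 h10]
    · rw [sum_erase_comm]
      refine Finset.sum_congr rfl fun b _ => Finset.sum_congr rfl fun a ha => ?_
      have hab : a ≠ b := (Finset.mem_erase.mp ha).1
      have harg : Function.update (Function.update x a (q * x a)) b (q⁻¹ * x b)
          = Function.update (Function.update x b (q⁻¹ * x b)) a (q * x a) :=
        Function.update_comm hab _ _ _
      rw [harg]
      have hcross := cross q t (x a) (x b) hq ht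
        (sub_ne_zero.mpr (h00 a b hab))
        (sub_ne_zero.mpr (Ne.symm (h10 a b hab)))
        (sub_ne_zero.mpr (Ne.symm (h10' b a hab.symm)))
      linear_combination ((∏ j ∈ (Finset.univ.erase a).erase b, (t * x a - x j) / (x a - x j)) *
        (∏ j ∈ (Finset.univ.erase b).erase a, (t⁻¹ * x b - x j) / (x b - x j)) *
        f (Function.update (Function.update x b (q⁻¹ * x b)) a (q * x a))) * hcross
end

section
/- Let p ∈ ℂ with 0 < |p| < 1, q, t ∈ ℂ^×, and let f be any function of m complex variables and g any function of n complex variables. Then (f ∗′ g)(x_1,…,x_{m+n}) = (g ∗ f)(x_1,…,x_{m+n}) at every point where both symmetrized expressions are defined, where ∗ is the star product built from ω_p(x,y) := Θ_p(q^{-1}y/x)Θ_p(ty/x)Θ_p(qt^{-1}y/x)/Θ_p(y/x)^3 and ∗′ is the star product built from ω′_p(x,y) := Θ_p(qy/x)Θ_p(t^{-1}y/x)Θ_p(q^{-1}ty/x)/Θ_p(y/x)^3. -/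
open scoped BigOperators

/-- The infinite product `(x;p)_∞ = ∏_{n ≥ 0} (1 - x pⁿ)`. -/
noncomputable def qPoch (p x : ℂ) : ℂ := ∏' n : ℕ, (1 - x * p ^ n)

/-- The theta function `Θ_p(x) = (p;p)_∞ (x;p)_∞ (p x⁻¹;p)_∞`. -/
noncomputable def theta (p x : ℂ) : ℂ := qPoch p p * qPoch p x * qPoch p (p * x⁻¹)

/-- The multiplicative lattice `p^ℤ = {p^k : k ∈ ℤ}`. -/
def pPowZ (p : ℂ) : Set ℂ := Set.range fun k : ℤ => p ^ k

/-- The star product `(f ∗_w g)(x₁,…,x_{m+n}) = Sym[f(x₁,…,x_m) g(x_{m+1},…,x_{m+n})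
∏_{1≤α≤m, m+1≤β≤m+n} w(x_α,x_β)]`. -/
noncomputable def starProd (w : ℂ → ℂ → ℂ) {m n : ℕ}
    (f : (Fin m → ℂ) → ℂ) (g : (Fin n → ℂ) → ℂ) (x : Fin (m + n) → ℂ) : ℂ :=
  (1 / (Nat.factorial (m + n) : ℂ)) *
    ∑ σ : Equiv.Perm (Fin (m + n)),
      f (fun i => x (σ (Fin.castAdd n i))) * g (fun j => x (σ (Fin.natAdd m j))) *
        ∏ i : Fin m, ∏ j : Fin n, w (x (σ (Fin.castAdd n i))) (x (σ (Fin.natAdd m j)))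

/-- `ω_p(x,y) = Θ_p(q⁻¹y/x)Θ_p(ty/x)Θ_p(qt⁻¹y/x)/Θ_p(y/x)³`. -/
noncomputable def omegaEll (q t p x y : ℂ) : ℂ :=
  theta p (q⁻¹ * y / x) * theta p (t * y / x) * theta p (q * t⁻¹ * y / x) /
    (theta p (y / x)) ^ 3

/-- `ω′_p(x,y) = Θ_p(qy/x)Θ_p(t⁻¹y/x)Θ_p(q⁻¹ty/x)/Θ_p(y/x)³`. -/
noncomputable def omegaEll' (q t p x y : ℂ) : ℂ :=
  theta p (q * y / x) * theta p (t⁻¹ * y / x) * theta p (q⁻¹ * t * y / x) /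
    (theta p (y / x)) ^ 3

lemma multipliable_qPoch (p x : ℂ) (hp1 : ‖p‖ < 1) :
    Multipliable (fun n : ℕ => 1 - x * p ^ n) := by
  by_cases h : ∃ n, 1 - x * p ^ n = 0
  · obtain ⟨n0, hn0⟩ := h
    refine ⟨0, ?_⟩
    have hev : ∀ᶠ s : Finset ℕ in Filter.atTop, ∏ i ∈ s, (1 - x * p ^ i) = 0 := by
      filter_upwards [Filter.eventually_ge_atTop ({n0} : Finset ℕ)] with s hs
      exact Finset.prod_eq_zero (hs (Finset.mem_singleton_self n0)) hn0
    exact tendsto_const_nhds.congr' (hev.mono fun s hs => hs.symm)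
  · push_neg at h
    have hsum : Summable fun n : ℕ => Complex.log (1 - x * p ^ n) := by
      have hg : Summable fun n : ℕ =>
          (3 / 2 : ℝ) * (‖x‖ * ‖p‖ ^ n) :=
        ((summable_geometric_of_lt_one (norm_nonneg p) hp1).mul_left
          (‖x‖)).mul_left _
      refine Summable.of_norm_bounded_eventually_nat hg ?_
      have ht : Filter.Tendsto (fun n : ℕ => ‖x‖ * ‖p‖ ^ n)
          Filter.atTop (nhds 0) := by
        simpa using (tendsto_pow_atTop_nhds_zero_of_lt_one (norm_nonneg p)
          hp1).const_mul (‖x‖)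
      filter_upwards [ht.eventually_le_const (by norm_num : (0:ℝ) < 1/2)] with nn hn
      have hz : ‖(-(x * p ^ nn) : ℂ)‖ ≤ 1 / 2 := by
        simpa [map_mul, map_pow] using hn
      have := Complex.norm_log_one_add_half_le_self hz
      rw [show (1 : ℂ) + -(x * p ^ nn) = 1 - x * p ^ nn by ring] at this
      simpa [map_mul, map_pow] using this
    exact ⟨_, hsum.hasSum.cexp.congr_fun fun n => (Complex.exp_log (h n)).symm⟩

set_option maxHeartbeats 2000000 in
lemma qPoch_peel (p x : ℂ) (hp1 : ‖p‖ < 1) :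
    qPoch p x = (1 - x) * qPoch p (p * x) := by
  have heq : (fun n : ℕ => 1 - x * p ^ (n + 1)) = fun n : ℕ => 1 - p * x * p ^ n := by
    funext b; rw [pow_succ]; ring
  have h2 : Multipliable fun n : ℕ => 1 - x * p ^ (n + 1) := by
    rw [heq]; exact multipliable_qPoch p (p * x) hp1
  rw [qPoch, tprod_eq_zero_mul' h2]
  simp only [pow_zero, mul_one]
  rw [heq, qPoch]

lemma theta_inv (p x : ℂ) (hp1 : ‖p‖ < 1) (hx : x ≠ 0) :
    theta p x⁻¹ = -x⁻¹ * theta p x := by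
  rw [theta, theta, inv_inv, qPoch_peel p x⁻¹ hp1, qPoch_peel p x hp1]
  have h1 : (1 : ℂ) - x⁻¹ = -x⁻¹ * (1 - x) := by
    field_simp; ring
  rw [h1]; ring

lemma omega_swap (p q t x y : ℂ) (hp1 : ‖p‖ < 1)
    (hq : q ≠ 0) (ht : t ≠ 0) (hx : x ≠ 0) (hy : y ≠ 0) :
    omegaEll' q t p x y = omegaEll q t p y x := by
  have hyx : y / x ≠ 0 := div_ne_zero hy hx
  have h1 : q⁻¹ * x / y = (q * y / x)⁻¹ := by field_simp
  have h2 : t * x / y = (t⁻¹ * y / x)⁻¹ := by field_simp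
  have h3 : q * t⁻¹ * x / y = (q⁻¹ * t * y / x)⁻¹ := by field_simp
  have h4 : x / y = (y / x)⁻¹ := (inv_div y x).symm
  rw [omegaEll, omegaEll', h1, h2, h3, h4,
    theta_inv p (q * y / x) hp1 (div_ne_zero (mul_ne_zero hq hy) hx),
    theta_inv p (t⁻¹ * y / x) hp1 (div_ne_zero (mul_ne_zero (inv_ne_zero ht) hy) hx),
    theta_inv p (q⁻¹ * t * y / x) hp1
      (div_ne_zero (mul_ne_zero (mul_ne_zero (inv_ne_zero hq) ht) hy) hx),
    theta_inv p (y / x) hp1 hyx]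
  have hs : (-(q * y / x)⁻¹) * (-(t⁻¹ * y / x)⁻¹) * (-(q⁻¹ * t * y / x)⁻¹)
      = (-(y / x)⁻¹) ^ 3 := by
    field_simp
  have hnum : (-(q * y / x)⁻¹ * theta p (q * y / x)) *
      (-(t⁻¹ * y / x)⁻¹ * theta p (t⁻¹ * y / x)) *
      (-(q⁻¹ * t * y / x)⁻¹ * theta p (q⁻¹ * t * y / x)) =
      (-(y / x)⁻¹) ^ 3 * (theta p (q * y / x) * theta p (t⁻¹ * y / x) *
        theta p (q⁻¹ * t * y / x)) := by
    linear_combination (theta p (q * y / x) * theta p (t⁻¹ * y / x) *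
      theta p (q⁻¹ * t * y / x)) * hs
  rw [mul_pow, hnum, mul_div_mul_left _ _ (pow_ne_zero 3 (neg_ne_zero.mpr
    (inv_ne_zero hyx)))]

/-- For the elliptic Feigin–Odesskii star products built from `ω_p` and `ω′_p`:
`(f ∗′ g)(x₁,…,x_{m+n}) = (g ∗ f)(x₁,…,x_{m+n})` at every point where both
symmetrized expressions are defined. -/
theorem starProd_prime_eq_swap_elliptic (p : ℂ) (hp0 : p ≠ 0) (hp1 : ‖p‖ < 1)
    (q t : ℂ) (hq : q ≠ 0) (ht : t ≠ 0) (m n : ℕ)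
    (f : (Fin m → ℂ) → ℂ) (g : (Fin n → ℂ) → ℂ) (x : Fin (m + n) → ℂ)
    (hx0 : ∀ i, x i ≠ 0) (hxd : ∀ i j, i ≠ j → x i / x j ∉ pPowZ p) :
    starProd (omegaEll' q t p) f g x =
      starProd (omegaEll q t p) g f (fun i => x (Fin.cast (Nat.add_comm n m) i)) := by
  classical
  rw [starProd, starProd]
  congr 1
  · rw [Nat.add_comm]
  · refine Fintype.sum_equiv
      ⟨fun σ => (finAddFlip.trans σ).trans (finCongr (Nat.add_comm m n)),
       fun τ => (finAddFlip.symm.trans τ).trans (finCongr (Nat.add_comm m n)).symm,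
       fun σ => by ext k; simp,
       fun τ => by ext k; simp⟩ _ _ fun σ => ?_
    simp only [Equiv.coe_fn_mk, Equiv.trans_apply, finCongr_apply,
      finAddFlip_apply_castAdd, finAddFlip_apply_natAdd, Fin.cast_cast, Fin.cast_eq_self]
    rw [mul_comm (f _) (g _), Finset.prod_comm]
    congr 1
    exact Finset.prod_congr rfl fun j _ => Finset.prod_congr rfl fun i _ =>
      omega_swap p q t _ _ hp1 hq ht (hx0 _) (hx0 _)
end
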